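/- If the Orlik–Solomon algebra A(G) is quadratic (A_2 = A, i.e., I is generated by its elements of degree ≤ 2), then the matroid G is line-closed: every line-closed subset of the ground set is closed. -/

import Mathlib

open ExteriorAlgebra

variable (K : Type*) [Field K] {n : ℕ}

/-- The generator `e i` of the exterior algebra `E = Λ(e_1,…,e_n)`. -/
noncomputable def gen (i : Fin n) : ExteriorAlgebra K (Fin n → K) :=
  ι K (Pi.single i 1)

/-- The monomial `e_S = e_{i_1} ∧ ⋯ ∧ e_{i_p}` for a tuple `S` given as a list. -/
noncomputable def eS (l : List (Fin n)) : ExteriorAlgebra K (Fin n → K) :=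
  (l.map (gen K)).prod

/-- `D` is the boundary map `∂`: it is linear and satisfies
`∂(e_{i_1} ∧ ⋯ ∧ e_{i_p}) = ∑ k (-1)^{k-1} e_{i_1} ∧ ⋯ ∧ ê_{i_k} ∧ ⋯ ∧ e_{i_p}`
(indexing the sum from `0`, the sign of the `k`-th term is `(-1)^k`). -/
def IsBoundary (D : ExteriorAlgebra K (Fin n → K) →ₗ[K] ExteriorAlgebra K (Fin n → K)) :
    Prop :=
  ∀ l : List (Fin n),
    D (eS K l) = ∑ k : Fin l.length, ((-1 : K) ^ (k : ℕ)) • eS K (l.eraseIdx k)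

/-- A circuit of a matroid: a minimal dependent set. -/
def IsCircuit {α : Type*} (M : Matroid α) (C : Set α) : Prop :=
  M.Dep C ∧ ∀ C' ⊂ C, ¬ M.Dep C'

/-- A simple matroid: every subset with at most two elements is independent
(no loops and no parallel points). -/
def MatroidSimple {α : Type*} (M : Matroid α) : Prop :=
  ∀ i j : α, M.Indep {i, j}

/-- The Orlik–Solomon ideal `I` of a matroid `G`: the ideal of the exterior algebra
generated by the boundaries `∂ e_S` of dependent tuples `S`. -/
noncomputable def OSIdeal (M : Matroid (Fin n))
    (D : ExteriorAlgebra K (Fin n → K) →ₗ[K] ExteriorAlgebra K (Fin n → K)) :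
    TwoSidedIdeal (ExteriorAlgebra K (Fin n → K)) :=
  TwoSidedIdeal.span
    {x | ∃ l : List (Fin n), l.Nodup ∧ M.Dep {i | i ∈ l} ∧ x = D (eS K l)}

/-- The defining relation of the Orlik–Solomon algebra `A(G) = E/I`:
each generator `∂ e_S` (`S` dependent) is set to zero. -/
def OSRel (M : Matroid (Fin n))
    (D : ExteriorAlgebra K (Fin n → K) →ₗ[K] ExteriorAlgebra K (Fin n → K)) :
    ExteriorAlgebra K (Fin n → K) → ExteriorAlgebra K (Fin n → K) → Prop :=
  fun x y => y = 0 ∧ ∃ l : List (Fin n), l.Nodup ∧ M.Dep {i | i ∈ l} ∧ x = D (eS K l)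

/-- The Orlik–Solomon algebra `A(G) = E/I`. -/
noncomputable abbrev OSAlgebra (M : Matroid (Fin n))
    (D : ExteriorAlgebra K (Fin n → K) →ₗ[K] ExteriorAlgebra K (Fin n → K)) :=
  RingQuot (OSRel K M D)

/-- The image `a_i` of the generator `e_i` in the Orlik–Solomon algebra. -/
noncomputable def aGen (M : Matroid (Fin n))
    (D : ExteriorAlgebra K (Fin n → K) →ₗ[K] ExteriorAlgebra K (Fin n → K))
    (i : Fin n) : OSAlgebra K M D :=
  RingQuot.mkAlgHom K (OSRel K M D) (gen K i)

/-- A set is line-closed if it contains the line (rank-2 flat) spanned by any two of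
its points. -/
def LineClosedSet {α : Type*} (M : Matroid α) (S : Set α) : Prop :=
  ∀ i ∈ S, ∀ j ∈ S, M.closure {i, j} ⊆ S

/-- The line-closure `ℓc(S)`: the smallest line-closed set containing `S`. -/
def lineClosure {α : Type*} (M : Matroid α) (S : Set α) : Set α :=
  ⋂₀ {T | S ⊆ T ∧ LineClosedSet M T}

/-- The `k`-adic Orlik–Solomon ideal `I_k`: the ideal generated by the homogeneous
components of `I` of degree at most `k`. -/
noncomputable def kAdicIdeal (M : Matroid (Fin n))
    (D : ExteriorAlgebra K (Fin n → K) →ₗ[K] ExteriorAlgebra K (Fin n → K)) (k : ℕ) :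
    TwoSidedIdeal (ExteriorAlgebra K (Fin n → K)) :=
  TwoSidedIdeal.span
    {x | x ∈ OSIdeal K M D ∧ ∃ j ≤ k, x ∈ ⋀[K]^j (Fin n → K)}


namespace FalkAux

variable {K : Type*} [Field K] {n : ℕ}

/-- monomial of a list of vectors -/
noncomputable def Elist (K : Type*) [Field K] {n : ℕ} (lv : List (Fin n → K)) :
    ExteriorAlgebra K (Fin n → K) :=
  (lv.map (ι K)).prod

lemma Elist_nil : Elist K ([] : List (Fin n → K)) = 1 := rfl

lemma Elist_cons (v : Fin n → K) (lv : List (Fin n → K)) :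
    Elist K (v :: lv) = ι K v * Elist K lv := by
  simp [Elist]

lemma Elist_append (l1 l2 : List (Fin n → K)) :
    Elist K (l1 ++ l2) = Elist K l1 * Elist K l2 := by
  simp [Elist]

lemma Elist_eq_ιMulti (lv : List (Fin n → K)) :
    Elist K lv = ιMulti K lv.length lv.get := by
  induction lv with
  | nil => simp [Elist_nil, ιMulti_zero_apply]
  | cons v lv ih =>
      rw [Elist_cons, ih]
      exact (ιMulti_succ_apply (R := K) ((v :: lv).get : Fin (lv.length + 1) → (Fin n → K))).symm

lemma Elist_mem (lv : List (Fin n → K)) :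
    Elist K lv ∈ ⋀[K]^(lv.length) (Fin n → K) := by
  rw [Elist_eq_ιMulti]
  exact ιMulti_range K _ ⟨_, rfl⟩

noncomputable def SPE (K : Type*) [Field K] (n : ℕ) :
    Submodule K (ExteriorAlgebra K (Fin n → K)) :=
  Submodule.span K {z : ExteriorAlgebra K (Fin n → K) | ∃ lv, z = Elist K lv}

lemma mul_mem_SPE : ∀ a ∈ SPE K n, ∀ b ∈ SPE K n, a * b ∈ SPE K n := by
  intro a ha
  refine Submodule.span_induction (p := fun a _ => ∀ b ∈ SPE K n, a * b ∈ SPE K n)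
    ?_ ?_ ?_ ?_ ha
  · rintro x ⟨lv, rfl⟩ b hb
    refine Submodule.span_induction (p := fun b _ => Elist K lv * b ∈ SPE K n)
      ?_ ?_ ?_ ?_ hb
    · rintro y ⟨lv', rfl⟩
      rw [← Elist_append]
      exact Submodule.subset_span ⟨_, rfl⟩
    · simpa using Submodule.zero_mem _
    · intro y z _ _ hy hz
      rw [mul_add]; exact Submodule.add_mem _ hy hz
    · intro c y _ hy
      rw [mul_smul_comm]; exact Submodule.smul_mem _ _ hy
  · intro b _; simpa using Submodule.zero_mem _
  · intro x y _ _ hx hy b hb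
    rw [add_mul]; exact Submodule.add_mem _ (hx b hb) (hy b hb)
  · intro c x _ hx b hb
    rw [smul_mul_assoc]; exact Submodule.smul_mem _ _ (hx b hb)

lemma mem_SPE (x : ExteriorAlgebra K (Fin n → K)) : x ∈ SPE K n := by
  induction x using ExteriorAlgebra.induction with
  | algebraMap r =>
      have : (algebraMap K (ExteriorAlgebra K (Fin n → K)) r)
          = r • Elist K ([] : List (Fin n → K)) := by
        rw [Elist_nil, Algebra.algebraMap_eq_smul_one]
      rw [this]
      exact Submodule.smul_mem _ _ (Submodule.subset_span ⟨[], rfl⟩)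
  | ι v =>
      have : ι K v = Elist K [v] := by simp [Elist]
      rw [this]; exact Submodule.subset_span ⟨[v], rfl⟩
  | mul a b ha hb => exact mul_mem_SPE a ha b hb
  | add a b ha hb => exact Submodule.add_mem _ ha hb

lemma ι_ι_central (a b : Fin n → K) (z : ExteriorAlgebra K (Fin n → K)) :
    z * (ι K a * ι K b) = ι K a * ι K b * z := by
  have swap : ∀ x y : Fin n → K, ι K x * ι K y = -(ι K y * ι K x) := fun x y =>
    eq_neg_of_add_eq_zero_left (ι_add_mul_swap x y)
  induction z using ExteriorAlgebra.induction with
  | algebraMap r => rw [Algebra.commutes]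
  | ι v => rw [← mul_assoc, swap v a, neg_mul, mul_assoc, swap v b, mul_neg, neg_neg, mul_assoc]
  | mul x y hx hy => rw [mul_assoc, hy, ← mul_assoc, hx, mul_assoc]
  | add x y hx hy => rw [add_mul, hx, hy, mul_add]



noncomputable def phiHat (p : ℕ) (χ : Fin n → Fin p → K) : (Fin n → K) →ₗ[K] (Fin p → K) where
  toFun v := fun j => ∑ a, v a * χ a j
  map_add' u v := by
    funext j
    simp [add_mul, Finset.sum_add_distrib]
  map_smul' c v := by
    funext j
    simp [Finset.mul_sum, mul_assoc]

lemma phiHat_single (p : ℕ) (χ : Fin n → Fin p → K) (a : Fin n) :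
    phiHat p χ (Pi.single a 1) = χ a := by
  funext j
  simp only [phiHat, LinearMap.coe_mk, AddHom.coe_mk]
  rw [Finset.sum_eq_single a]
  · simp
  · intro b _ hb; simp [Pi.single_apply, hb]
  · intro h; exact absurd (Finset.mem_univ a) h

noncomputable def nuMap (p : ℕ) (χ : Fin n → Fin p → K) :
    (Fin n → K) [⋀^Fin p]→ₗ[K] K :=
  (Matrix.detRowAlternating : (Fin p → K) [⋀^Fin p]→ₗ[K] K).compLinearMap (phiHat p χ)

noncomputable def lam (p : ℕ) (χ : Fin n → Fin p → K) :
    ExteriorAlgebra K (Fin n → K) →ₗ[K] K :=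
  liftAlternating (Function.update (fun i => (0 : (Fin n → K) [⋀^Fin i]→ₗ[K] K)) p (nuMap p χ))

lemma lam_Elist_ne {p : ℕ} (χ : Fin n → Fin p → K) (lv : List (Fin n → K))
    (h : lv.length ≠ p) : lam p χ (Elist K lv) = 0 := by
  rw [Elist_eq_ιMulti, lam, liftAlternating_apply_ιMulti, Function.update_of_ne h]
  rfl

lemma lam_Elist_eq {p : ℕ} (χ : Fin n → Fin p → K) (lv : List (Fin n → K))
    (h : lv.length = p) :
    lam p χ (Elist K lv)
      = Matrix.detRowAlternating (fun i : Fin p => phiHat p χ (lv.get (Fin.cast h.symm i))) := by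
  subst h
  rw [Elist_eq_ιMulti, lam, liftAlternating_apply_ιMulti, Function.update_self]
  rfl

/-- rows of a (r+2)=p matrix: first `r` rows from `X`, then `y`, then `z`. -/
def rowsF {α : Type*} {r p : ℕ} (_ : r + 2 = p) (X : Fin r → α) (y z : α) : Fin p → α :=
  fun i => if h : (i : ℕ) < r then X ⟨i, h⟩ else if (i : ℕ) = r then y else z

lemma rowsF_fst {α : Type*} {r p : ℕ} (hr : r + 2 = p) (X : Fin r → α) (y z : α) :
    rowsF hr X y z ⟨r, by omega⟩ = y := by simp [rowsF]

lemma rowsF_snd {α : Type*} {r p : ℕ} (hr : r + 2 = p) (X : Fin r → α) (y z : α) :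
    rowsF hr X y z ⟨r + 1, by omega⟩ = z := by
  have h1 : ¬ (r + 1 < r) := by omega
  have h2 : ¬ (r + 1 = r) := by omega
  simp [rowsF, h1, h2]

lemma rowsF_swap {α : Type*} {r p : ℕ} (hr : r + 2 = p) (X : Fin r → α) (y z : α) :
    (rowsF hr X y z) ∘ (Equiv.swap (⟨r, by omega⟩ : Fin p) ⟨r + 1, by omega⟩)
      = rowsF hr X z y := by
  funext i
  by_cases h1 : (i : ℕ) < r
  · have hne1 : i ≠ ⟨r, by omega⟩ := by simp [Fin.ext_iff]; omega
    have hne2 : i ≠ ⟨r + 1, by omega⟩ := by simp [Fin.ext_iff]; omega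
    simp only [Function.comp_apply, Equiv.swap_apply_of_ne_of_ne hne1 hne2]
    simp [rowsF, h1]
  · by_cases h2 : (i : ℕ) = r
    · have : i = (⟨r, by omega⟩ : Fin p) := by simp [Fin.ext_iff, h2]
      rw [this]
      simp only [Function.comp_apply, Equiv.swap_apply_left]
      rw [rowsF_snd, rowsF_fst]
    · have h3 : (i : ℕ) = r + 1 := by have := i.isLt; omega
      have : i = (⟨r + 1, by omega⟩ : Fin p) := by simp [Fin.ext_iff, h3]
      rw [this]
      simp only [Function.comp_apply, Equiv.swap_apply_right]
      rw [rowsF_fst, rowsF_snd]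

lemma det3 {r p : ℕ} (hr : r + 2 = p) (f : (Fin p → K) [⋀^Fin p]→ₗ[K] K)
    (X : Fin r → (Fin p → K)) (A B C : Fin p → K)
    (h2 : A = B ∨ A = C ∨ B = C) :
    f (rowsF hr X B C) - f (rowsF hr X A C) + f (rowsF hr X A B) = 0 := by
  have hij : (⟨r, by omega⟩ : Fin p) ≠ ⟨r + 1, by omega⟩ := by simp [Fin.ext_iff]
  rcases h2 with h | h | h
  · subst h
    have h0 : f (rowsF hr X A A) = 0 :=
      f.map_eq_zero_of_eq _ (by rw [rowsF_fst, rowsF_snd]) hij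
    rw [h0]; ring
  · subst h
    have h0 : f (rowsF hr X A A) = 0 :=
      f.map_eq_zero_of_eq _ (by rw [rowsF_fst, rowsF_snd]) hij
    have hsw : f (rowsF hr X B A) = - f (rowsF hr X A B) := by
      rw [← rowsF_swap hr X A B]
      exact f.map_swap _ hij
    rw [h0, hsw]; ring
  · subst h
    have h0 : f (rowsF hr X B B) = 0 :=
      f.map_eq_zero_of_eq _ (by rw [rowsF_fst, rowsF_snd]) hij
    rw [h0]; ring


lemma eS_eq_Elist (l : List (Fin n)) :
    eS K l = Elist K (l.map fun i => (Pi.single i 1 : Fin n → K)) := by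
  simp only [eS, Elist, List.map_map]
  rfl

lemma eS_mem (l : List (Fin n)) : eS K l ∈ ⋀[K]^(l.length) (Fin n → K) := by
  rw [eS_eq_Elist]
  have := Elist_mem (K := K) (l.map fun i => (Pi.single i (1 : K)))
  simpa using this

lemma D_eS_mem (D : ExteriorAlgebra K (Fin n → K) →ₗ[K] ExteriorAlgebra K (Fin n → K))
    (hD : IsBoundary K D) (l : List (Fin n)) :
    D (eS K l) ∈ ⋀[K]^(l.length - 1) (Fin n → K) := by
  rw [hD l]
  refine Submodule.sum_mem _ fun k _ => Submodule.smul_mem _ _ ?_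
  have hlen : (l.eraseIdx (k : ℕ)).length = l.length - 1 := by
    rw [List.length_eraseIdx]; simp [k.isLt]
  have := eS_mem (K := K) (l.eraseIdx (k : ℕ))
  rwa [hlen] at this

lemma D_eS_three_eq (D : ExteriorAlgebra K (Fin n → K) →ₗ[K] ExteriorAlgebra K (Fin n → K))
    (hD : IsBoundary K D) (u v w : Fin n) :
    D (eS K [u, v, w]) = eS K [v, w] - eS K [u, w] + eS K [u, v] := by
  rw [hD [u, v, w]]
  have e0 : ([u, v, w] : List (Fin n)).eraseIdx 0 = [v, w] := rfl
  have e1 : ([u, v, w] : List (Fin n)).eraseIdx 1 = [u, w] := rfl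
  have e2 : ([u, v, w] : List (Fin n)).eraseIdx 2 = [u, v] := rfl
  have hp2 : ((-1 : K)) ^ (2 : ℕ) = 1 := by norm_num
  show ∑ k : Fin 3, ((-1 : K) ^ (k : ℕ)) • eS K (([u, v, w]).eraseIdx (k : ℕ)) = _
  rw [Fin.sum_univ_three]
  simp only [Fin.val_zero, Fin.val_one, Fin.val_two, pow_zero, pow_one, hp2, e0, e1, e2,
    one_smul, neg_smul]
  abel

lemma eS_pair_mul_comm (c d : Fin n) (z : ExteriorAlgebra K (Fin n → K)) :
    z * eS K [c, d] = eS K [c, d] * z := by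
  have h : eS K [c, d] = ι K (Pi.single c 1) * ι K (Pi.single d 1) := by
    simp [eS, gen]
  rw [h]
  exact ι_ι_central _ _ z

lemma D_eS_three_comm (D : ExteriorAlgebra K (Fin n → K) →ₗ[K] ExteriorAlgebra K (Fin n → K))
    (hD : IsBoundary K D) (u v w : Fin n) (z : ExteriorAlgebra K (Fin n → K)) :
    z * D (eS K [u, v, w]) = D (eS K [u, v, w]) * z := by
  rw [D_eS_three_eq D hD u v w, mul_add, mul_sub, eS_pair_mul_comm, eS_pair_mul_comm,
    eS_pair_mul_comm, add_mul, sub_mul]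

lemma rows_of_append {p : ℕ} (χ : Fin n → Fin p → K) (lv : List (Fin n → K)) (c d : Fin n)
    (hlv : lv.length + 2 = p)
    (h : (lv ++ [(Pi.single c 1 : Fin n → K), Pi.single d 1]).length = p) :
    (fun i : Fin p =>
        phiHat p χ ((lv ++ [(Pi.single c 1 : Fin n → K), Pi.single d 1]).get (Fin.cast h.symm i)))
      = rowsF hlv (fun i => phiHat p χ (lv.get i)) (χ c) (χ d) := by
  funext i
  by_cases h1 : (i : ℕ) < lv.length
  · have : rowsF hlv (fun i => phiHat p χ (lv.get i)) (χ c) (χ d) i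
        = phiHat p χ (lv.get ⟨(i : ℕ), h1⟩) := by
      simp [rowsF, h1]
    rw [this]
    congr 1
    rw [List.get_eq_getElem, List.get_eq_getElem]
    simp only [Fin.coe_cast]
    rw [List.getElem_append_left h1]
  · by_cases h2 : (i : ℕ) = lv.length
    · have hr : rowsF hlv (fun i => phiHat p χ (lv.get i)) (χ c) (χ d) i = χ c := by
        simp [rowsF, h1, h2]
      rw [hr]
      have : (lv ++ [(Pi.single c 1 : Fin n → K), Pi.single d 1]).get (Fin.cast h.symm i)
          = Pi.single c 1 := by
        rw [List.get_eq_getElem]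
        simp only [Fin.coe_cast]
        rw [List.getElem_append_right (by omega)]
        simp [h2]
      rw [this, phiHat_single]
    · have h3 : (i : ℕ) = lv.length + 1 := by have := i.isLt; omega
      have hr : rowsF hlv (fun i => phiHat p χ (lv.get i)) (χ c) (χ d) i = χ d := by
        simp [rowsF, h1, h2, h3]
      rw [hr]
      have : (lv ++ [(Pi.single c 1 : Fin n → K), Pi.single d 1]).get (Fin.cast h.symm i)
          = Pi.single d 1 := by
        rw [List.get_eq_getElem]
        simp only [Fin.coe_cast]
        rw [List.getElem_append_right (by omega)]
        simp [h3]
      rw [this, phiHat_single]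

lemma lam_mul_D_three {p : ℕ} (χ : Fin n → Fin p → K) (M : Matroid (Fin n))
    (D : ExteriorAlgebra K (Fin n → K) →ₗ[K] ExteriorAlgebra K (Fin n → K))
    (hD : IsBoundary K D)
    (hχ : ∀ u v w : Fin n, u ≠ v → u ≠ w → v ≠ w → M.Dep {u, v, w} →
      χ u = χ v ∨ χ u = χ w ∨ χ v = χ w)
    (l : List (Fin n)) (hnd : l.Nodup) (hdep : M.Dep {i | i ∈ l}) (hlen : l.length = 3)
    (a b : ExteriorAlgebra K (Fin n → K)) :
    lam p χ (a * D (eS K l) * b) = 0 := by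
  obtain ⟨u, v, w, rfl⟩ := List.length_eq_three.mp hlen
  have huv : u ≠ v := by simp at hnd; tauto
  have huw : u ≠ w := by simp at hnd; tauto
  have hvw : v ≠ w := by simp at hnd; tauto
  have hdep' : M.Dep {u, v, w} := by
    have : {i | i ∈ [u, v, w]} = ({u, v, w} : Set (Fin n)) := by
      ext i; simp [Set.mem_insert_iff]
    rwa [this] at hdep
  have hzred : a * D (eS K [u, v, w]) * b = a * b * D (eS K [u, v, w]) := by
    rw [mul_assoc, ← D_eS_three_comm D hD u v w b, ← mul_assoc]
  rw [hzred]
  have main : ∀ z : ExteriorAlgebra K (Fin n → K),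
      lam p χ (z * D (eS K [u, v, w])) = 0 := by
    intro z
    have hz' := mem_SPE (K := K) z
    refine Submodule.span_induction
      (p := fun z _ => lam p χ (z * D (eS K [u, v, w])) = 0) ?_ ?_ ?_ ?_ hz'
    · rintro y ⟨lv, rfl⟩
      rw [D_eS_three_eq D hD u v w, mul_add, mul_sub, map_add, map_sub]
      have hterm : ∀ c d : Fin n, Elist K lv * eS K [c, d]
          = Elist K (lv ++ [(Pi.single c 1 : Fin n → K), Pi.single d 1]) := by
        intro c d
        rw [eS_eq_Elist, ← Elist_append]
        rfl
      rw [hterm v w, hterm u w, hterm u v]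
      by_cases hlv : lv.length + 2 = p
      · have hlen' : ∀ c d : Fin n,
            (lv ++ [(Pi.single c 1 : Fin n → K), Pi.single d 1]).length = p := by
          intro c d; simp [← hlv]
        rw [lam_Elist_eq χ _ (hlen' v w), lam_Elist_eq χ _ (hlen' u w),
          lam_Elist_eq χ _ (hlen' u v)]
        rw [rows_of_append χ lv v w hlv (hlen' v w), rows_of_append χ lv u w hlv (hlen' u w),
          rows_of_append χ lv u v hlv (hlen' u v)]
        exact det3 hlv _ (fun i => phiHat p χ (lv.get i)) (χ u) (χ v) (χ w)
          (hχ u v w huv huw hvw hdep')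
      · have hlen' : ∀ c d : Fin n,
            (lv ++ [(Pi.single c 1 : Fin n → K), Pi.single d 1]).length ≠ p := by
          intro c d; simp only [List.length_append, List.length_cons, List.length_nil]
          omega
        rw [lam_Elist_ne χ _ (hlen' v w), lam_Elist_ne χ _ (hlen' u w),
          lam_Elist_ne χ _ (hlen' u v)]
        ring
    · simp
    · intro y z _ _ hy hz
      rw [add_mul, map_add, hy, hz, add_zero]
    · intro c y _ hy
      rw [smul_mul_assoc, map_smul, hy, smul_zero]
  exact main (a * b)

lemma dep_list_length (M : Matroid (Fin n)) (hsimple : MatroidSimple M)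
    (l : List (Fin n)) (hdep : M.Dep {i | i ∈ l}) : 3 ≤ l.length := by
  by_contra hcon
  push_neg at hcon
  have hni := hdep.not_indep
  match l, hcon with
  | [], _ =>
      apply hni
      have : {i : Fin n | i ∈ ([] : List (Fin n))} = ∅ := by ext i; simp
      rw [this]; exact M.empty_indep
  | [a], _ =>
      apply hni
      have : {i : Fin n | i ∈ [a]} = ({a, a} : Set (Fin n)) := by ext i; simp
      rw [this]; exact hsimple a a
  | [a, b], _ =>
      apply hni
      have : {i : Fin n | i ∈ [a, b]} = ({a, b} : Set (Fin n)) := by ext i; simp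
      rw [this]; exact hsimple a b

noncomputable def projE (K : Type*) [Field K] {n : ℕ} (j : ℕ)
    (y : ExteriorAlgebra K (Fin n → K)) : ExteriorAlgebra K (Fin n → K) :=
  (DirectSum.decompose (fun i => ⋀[K]^i (Fin n → K)) y j : ExteriorAlgebra K (Fin n → K))

lemma projE_zero (j : ℕ) : projE K j (0 : ExteriorAlgebra K (Fin n → K)) = 0 := by
  unfold projE
  rw [DirectSum.decompose_zero, DirectSum.zero_apply, ZeroMemClass.coe_zero]

lemma projE_add (j : ℕ) (y z : ExteriorAlgebra K (Fin n → K)) :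
    projE K j (y + z) = projE K j y + projE K j z := by
  unfold projE
  rw [DirectSum.decompose_add, DirectSum.add_apply, Submodule.coe_add]

lemma projE_smul (j : ℕ) (c : K) (y : ExteriorAlgebra K (Fin n → K)) :
    projE K j (c • y) = c • projE K j y := by
  unfold projE
  rw [DirectSum.decompose_smul, DirectSum.smul_apply, Submodule.coe_smul]

lemma projE_same {j : ℕ} {y : ExteriorAlgebra K (Fin n → K)}
    (hy : y ∈ ⋀[K]^j (Fin n → K)) : projE K j y = y :=
  DirectSum.decompose_of_mem_same _ hy

lemma projE_ne {q j : ℕ} {y : ExteriorAlgebra K (Fin n → K)}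
    (hy : y ∈ ⋀[K]^q (Fin n → K)) (hqj : q ≠ j) : projE K j y = 0 :=
  DirectSum.decompose_of_mem_ne _ hy hqj

lemma OSIdeal_sub_W (M : Matroid (Fin n))
    (D : ExteriorAlgebra K (Fin n → K) →ₗ[K] ExteriorAlgebra K (Fin n → K)) :
    ∀ y ∈ OSIdeal K M D, y ∈ Submodule.span K
      {z : ExteriorAlgebra K (Fin n → K) | ∃ lv l lv', l.Nodup ∧ M.Dep {i | i ∈ l} ∧
        z = Elist K lv * (D (eS K l) * Elist K lv')} := by
  intro y hy
  set W := Submodule.span K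
      {z : ExteriorAlgebra K (Fin n → K) | ∃ lv l lv', l.Nodup ∧ M.Dep {i | i ∈ l} ∧
        z = Elist K lv * (D (eS K l) * Elist K lv')} with hW
  have hmull : ∀ x : ExteriorAlgebra K (Fin n → K), ∀ y ∈ W, x * y ∈ W := by
    intro x y hyW
    refine Submodule.span_induction (p := fun y _ => x * y ∈ W) ?_ ?_ ?_ ?_ hyW
    · rintro z ⟨lv, l, lv', hnd, hdep, rfl⟩
      have hx := mem_SPE (K := K) x
      refine Submodule.span_induction (p := fun x _ =>
        x * (Elist K lv * (D (eS K l) * Elist K lv')) ∈ W) ?_ ?_ ?_ ?_ hx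
      · rintro x' ⟨lx, rfl⟩
        rw [← mul_assoc, ← Elist_append]
        exact Submodule.subset_span ⟨lx ++ lv, l, lv', hnd, hdep, rfl⟩
      · rw [zero_mul]; exact Submodule.zero_mem _
      · intro a b _ _ ha hb; rw [add_mul]; exact Submodule.add_mem _ ha hb
      · intro c a _ ha; rw [smul_mul_assoc]; exact Submodule.smul_mem _ _ ha
    · rw [mul_zero]; exact Submodule.zero_mem _
    · intro a b _ _ ha hb; rw [mul_add]; exact Submodule.add_mem _ ha hb
    · intro c a _ ha; rw [mul_smul_comm]; exact Submodule.smul_mem _ _ ha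
  have hmulr : ∀ x : ExteriorAlgebra K (Fin n → K), ∀ y ∈ W, y * x ∈ W := by
    intro x y hyW
    refine Submodule.span_induction (p := fun y _ => y * x ∈ W) ?_ ?_ ?_ ?_ hyW
    · rintro z ⟨lv, l, lv', hnd, hdep, rfl⟩
      have hx := mem_SPE (K := K) x
      refine Submodule.span_induction (p := fun x _ =>
        Elist K lv * (D (eS K l) * Elist K lv') * x ∈ W) ?_ ?_ ?_ ?_ hx
      · rintro x' ⟨lx, rfl⟩
        rw [mul_assoc, mul_assoc, ← Elist_append, ← mul_assoc]
        exact Submodule.subset_span ⟨lv, l, lv' ++ lx, hnd, hdep, by rw [mul_assoc]⟩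
      · rw [mul_zero]; exact Submodule.zero_mem _
      · intro a b _ _ ha hb; rw [mul_add]; exact Submodule.add_mem _ ha hb
      · intro c a _ ha; rw [mul_smul_comm]; exact Submodule.smul_mem _ _ ha
    · rw [zero_mul]; exact Submodule.zero_mem _
    · intro a b _ _ ha hb; rw [add_mul]; exact Submodule.add_mem _ ha hb
    · intro c a _ ha; rw [smul_mul_assoc]; exact Submodule.smul_mem _ _ ha
  have hJ : ∀ g ∈ ({x | ∃ l : List (Fin n), l.Nodup ∧ M.Dep {i | i ∈ l} ∧ x = D (eS K l)} :
      Set (ExteriorAlgebra K (Fin n → K))),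
      g ∈ TwoSidedIdeal.mk' (W : Set (ExteriorAlgebra K (Fin n → K)))
        (Submodule.zero_mem _) (fun ha hb => Submodule.add_mem _ ha hb)
        (fun ha => Submodule.neg_mem _ ha)
        (fun {x y} hy => hmull x y hy) (fun {x y} hx => hmulr y x hx) := by
    rintro g ⟨l, hnd, hdep, rfl⟩
    rw [TwoSidedIdeal.mem_mk']
    have : D (eS K l) = Elist K [] * (D (eS K l) * Elist K []) := by
      rw [Elist_nil, one_mul, mul_one]
    rw [this]
    exact Submodule.subset_span ⟨[], l, [], hnd, hdep, rfl⟩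
  have := TwoSidedIdeal.mem_span_iff.mp hy _ hJ
  rwa [TwoSidedIdeal.mem_mk'] at this

lemma keyP (M : Matroid (Fin n)) (hsimple : MatroidSimple M)
    (D : ExteriorAlgebra K (Fin n → K) →ₗ[K] ExteriorAlgebra K (Fin n → K))
    (hD : IsBoundary K D) {p : ℕ} (χ : Fin n → Fin p → K)
    (hχ : ∀ u v w : Fin n, u ≠ v → u ≠ w → v ≠ w → M.Dep {u, v, w} →
      χ u = χ v ∨ χ u = χ w ∨ χ v = χ w) :
    ∀ y ∈ OSIdeal K M D, ∀ j ≤ 2, ∀ a b : ExteriorAlgebra K (Fin n → K),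
      lam p χ (a * projE K j y * b) = 0 := by
  intro y hy
  have hyW := OSIdeal_sub_W M D y hy
  refine Submodule.span_induction (p := fun y _ => ∀ j ≤ 2,
    ∀ a b : ExteriorAlgebra K (Fin n → K), lam p χ (a * projE K j y * b) = 0)
    ?_ ?_ ?_ ?_ hyW
  · rintro z ⟨lv, l, lv', hnd, hdep, rfl⟩ j hj a b
    have hlen3 := dep_list_length M hsimple l hdep
    have hmem : Elist K lv * (D (eS K l) * Elist K lv')
        ∈ ⋀[K]^(lv.length + ((l.length - 1) + lv'.length)) (Fin n → K) :=
      SetLike.mul_mem_graded (Elist_mem lv)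
        (SetLike.mul_mem_graded (D_eS_mem D hD l) (Elist_mem lv'))
    by_cases hq : lv.length + ((l.length - 1) + lv'.length) = j
    · have hz := projE_same (hq ▸ hmem)
      rw [hz]
      have h1 : lv.length = 0 := by omega
      have h2 : lv'.length = 0 := by omega
      have h3 : l.length = 3 := by omega
      rw [List.length_eq_zero_iff.mp h1, List.length_eq_zero_iff.mp h2, Elist_nil, one_mul, mul_one]
      exact lam_mul_D_three χ M D hD hχ l hnd hdep h3 a b
    · rw [projE_ne hmem hq, mul_zero, zero_mul, map_zero]
  · intro j _ a b
    rw [projE_zero, mul_zero, zero_mul, map_zero]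
  · intro y z _ _ hy' hz' j hj a b
    rw [projE_add, mul_add, add_mul, map_add, hy' j hj, hz' j hj, add_zero]
  · intro c y _ hy' j hj a b
    rw [projE_smul, mul_smul_comm, smul_mul_assoc, map_smul, hy' j hj, smul_zero]

lemma lam_kAdic_zero (M : Matroid (Fin n)) (hsimple : MatroidSimple M)
    (D : ExteriorAlgebra K (Fin n → K) →ₗ[K] ExteriorAlgebra K (Fin n → K))
    (hD : IsBoundary K D) {p : ℕ} (χ : Fin n → Fin p → K)
    (hχ : ∀ u v w : Fin n, u ≠ v → u ≠ w → v ≠ w → M.Dep {u, v, w} →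
      χ u = χ v ∨ χ u = χ w ∨ χ v = χ w) :
    ∀ y ∈ kAdicIdeal K M D 2, lam p χ y = 0 := by
  intro y hy
  set A : Set (ExteriorAlgebra K (Fin n → K)) :=
    {y | ∀ a b : ExteriorAlgebra K (Fin n → K), lam p χ (a * y * b) = 0} with hA
  have hzeroA : (0 : ExteriorAlgebra K (Fin n → K)) ∈ A := by
    intro a b; rw [mul_zero, zero_mul, map_zero]
  have haddA : ∀ {x y : ExteriorAlgebra K (Fin n → K)}, x ∈ A → y ∈ A → x + y ∈ A := by
    intro x y hx hy' a b; rw [mul_add, add_mul, map_add, hx a b, hy' a b, add_zero]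
  have hnegA : ∀ {x : ExteriorAlgebra K (Fin n → K)}, x ∈ A → -x ∈ A := by
    intro x hx a b; rw [mul_neg, neg_mul, map_neg, hx a b, neg_zero]
  have hmullA : ∀ {x y : ExteriorAlgebra K (Fin n → K)}, y ∈ A → x * y ∈ A := by
    intro x y hy' a b
    have : a * (x * y) * b = (a * x) * y * b := by simp only [mul_assoc]
    rw [this]; exact hy' (a * x) b
  have hmulrA : ∀ {x y : ExteriorAlgebra K (Fin n → K)}, x ∈ A → x * y ∈ A := by
    intro x y hx a b
    have : a * (x * y) * b = a * x * (y * b) := by simp only [mul_assoc]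
    rw [this]; exact hx a (y * b)
  have hgen : ∀ g ∈ ({x | x ∈ OSIdeal K M D ∧ ∃ j ≤ 2, x ∈ ⋀[K]^j (Fin n → K)} :
      Set (ExteriorAlgebra K (Fin n → K))),
      g ∈ TwoSidedIdeal.mk' A hzeroA haddA hnegA hmullA hmulrA := by
    rintro g ⟨hgOS, j, hj2, hgj⟩
    rw [TwoSidedIdeal.mem_mk']
    intro a b
    have := keyP M hsimple D hD χ hχ g hgOS j hj2 a b
    rwa [projE_same hgj] at this
  have hmem := TwoSidedIdeal.mem_span_iff.mp hy _ hgen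
  rw [TwoSidedIdeal.mem_mk'] at hmem
  have := hmem 1 1
  rwa [one_mul, mul_one] at this

end FalkAux

open FalkAux

/-- if the Orlik–Solomon algebra is quadratic (`I` is generated by its
elements of degree ≤ 2, i.e. `I_2 = I`), then the matroid is line-closed: every
line-closed subset is a flat. -/
theorem line_closed_of_quadratic (M : Matroid (Fin n)) (hE : M.E = Set.univ)
    (hsimple : MatroidSimple M)
    (D : ExteriorAlgebra K (Fin n → K) →ₗ[K] ExteriorAlgebra K (Fin n → K))
    (hD : IsBoundary K D)
    (hquad : ∀ x, x ∈ kAdicIdeal K M D 2 ↔ x ∈ OSIdeal K M D) :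
    ∀ S : Set (Fin n), LineClosedSet M S → M.IsFlat S := by
  classical
  intro S hLC
  have hSE : S ⊆ M.E := by rw [hE]; exact Set.subset_univ S
  have hclS : M.closure S ⊆ S := by
    intro x hx
    by_contra hxS
    obtain ⟨T, hT⟩ := M.exists_isBasis S hSE
    have hTi : M.Indep T := hT.indep
    have hTS : T ⊆ S := hT.subset
    have hxT : x ∈ M.closure T := by rw [hT.closure_eq_closure]; exact hx
    have hTfin : T.Finite := Set.toFinite T
    set Tl : List (Fin n) := hTfin.toFinset.toList with hTldef
    have hTlnd : Tl.Nodup := Finset.nodup_toList _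
    have hTlmem : ∀ i, i ∈ Tl ↔ i ∈ T := by
      intro i; rw [hTldef, Finset.mem_toList, Set.Finite.mem_toFinset]
    set F : Fin Tl.length → Set (Fin n) :=
      fun j => M.closure ((fun k : Fin Tl.length => Tl.get k) '' {k | k ≤ j}) with hFdef
    set χ : Fin n → Fin Tl.length → K :=
      fun a j => if a ∈ S ∧ a ∈ F j then 1 else 0 with hχdef
    have hget_mem : ∀ k : Fin Tl.length, Tl.get k ∈ T := fun k =>
      (hTlmem _).mp (List.get_mem Tl k)
    have hget_inj : Function.Injective (fun k : Fin Tl.length => Tl.get k) :=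
      List.nodup_iff_injective_get.mp hTlnd
    have hupset : ∀ a : Fin n, ∀ j j' : Fin Tl.length, j ≤ j' → a ∈ F j → a ∈ F j' := by
      intro a j j' hjj' ha
      refine M.closure_subset_closure (Set.image_mono ?_) ha
      intro k hk; exact le_trans hk hjj'
    have hthird : ∀ a b c : Fin n, a ≠ b → b ≠ c → a ≠ c → M.Dep {a, b, c} →
        c ∈ M.closure {a, b} := by
      intro a b c hab hbc hac hdep
      have habI : M.Indep {a, b} := hsimple a b
      by_contra hcl
      have : M.Indep (insert c {a, b}) := by
        rw [habI.insert_indep_iff]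
        exact Or.inl ⟨by rw [hE]; trivial, hcl⟩
      have hins : insert c ({a, b} : Set (Fin n)) = {a, b, c} := by
        ext t; simp; tauto
      rw [hins] at this
      exact hdep.not_indep this
    have hFflatsub : ∀ (a b : Fin n) (j : Fin Tl.length), a ∈ F j → b ∈ F j →
        M.closure {a, b} ⊆ F j := by
      intro a b j ha hb
      refine Matroid.closure_subset_closure_of_subset_closure ?_
      intro t ht
      rcases ht with rfl | rfl
      · exact ha
      · exact hb
    have hincl : ∀ a b c : Fin n, c ∈ M.closure {a, b} →
        (∀ j, b ∈ F j → a ∈ F j) → (∀ j, b ∈ F j → c ∈ F j) := by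
      intro a b c hc hsub j hbj
      exact hFflatsub a b j (hsub j hbj) hbj hc
    have htot : ∀ a b : Fin n, (∀ j, a ∈ F j → b ∈ F j) ∨ (∀ j, b ∈ F j → a ∈ F j) := by
      intro a b
      by_contra hcon
      push_neg at hcon
      obtain ⟨⟨j, haj, hbj⟩, ⟨j', hbj', haj'⟩⟩ := hcon
      rcases le_total j j' with h | h
      · exact haj' (hupset a j j' h haj)
      · exact hbj (hupset b j' j h hbj')
    have hχeq : ∀ a b : Fin n, a ∈ S → b ∈ S → (∀ j, a ∈ F j ↔ b ∈ F j) → χ a = χ b := by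
      intro a b ha hb hiff
      funext j
      simp only [hχdef]
      by_cases h : a ∈ F j
      · rw [if_pos ⟨ha, h⟩, if_pos ⟨hb, (hiff j).mp h⟩]
      · rw [if_neg (fun hc => h hc.2), if_neg (fun hc => h ((hiff j).mpr hc.2))]
    have hχ0 : ∀ a : Fin n, a ∉ S → χ a = 0 := by
      intro a ha; funext j; simp only [hχdef]
      rw [if_neg (fun hc => ha hc.1)]; simp
    have hcore : ∀ a b c : Fin n, a ∈ S → b ∈ S → c ∈ S → a ≠ b → a ≠ c → b ≠ c →
        M.Dep {a, b, c} → (∀ j, b ∈ F j → a ∈ F j) → (χ b = χ c ∨ χ a = χ b) := by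
      intro a b c ha hb hc hab hac hbc hdep hba
      have hcab : c ∈ M.closure {a, b} := hthird a b c hab hbc hac hdep
      have hdep2 : M.Dep {a, c, b} := by
        rw [show ({a, c, b} : Set (Fin n)) = {a, b, c} by ext t; simp; tauto]; exact hdep
      have hbac : b ∈ M.closure {a, c} := hthird a c b hac (Ne.symm hbc) hab hdep2
      have h1 : ∀ j, b ∈ F j → c ∈ F j := hincl a b c hcab hba
      rcases htot c b with h2 | h2
      · exact Or.inl (hχeq b c hb hc (fun j => ⟨fun h => h1 j h, fun h => h2 j h⟩))
      · rcases htot c a with h3 | h3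
        · have h4 : ∀ j, c ∈ F j → b ∈ F j := hincl a c b hbac h3
          exact Or.inl (hχeq b c hb hc (fun j => ⟨fun h => h1 j h, fun h => h4 j h⟩))
        · have hbca : b ∈ M.closure {c, a} := by
            rw [show ({c, a} : Set (Fin n)) = {a, c} by ext t; simp; tauto]
            exact hbac
          have h4 : ∀ j, a ∈ F j → b ∈ F j := hincl c a b hbca h3
          exact Or.inr (hχeq a b ha hb (fun j => ⟨fun h => h4 j h, fun h => hba j h⟩))
    have hχmain : ∀ u v w : Fin n, u ≠ v → u ≠ w → v ≠ w → M.Dep {u, v, w} →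
        χ u = χ v ∨ χ u = χ w ∨ χ v = χ w := by
      intro u v w huv huw hvw hdep
      by_cases hu : u ∈ S
      · by_cases hv : v ∈ S
        · by_cases hw : w ∈ S
          · rcases htot u v with h | h
            · have hdep' : M.Dep {v, u, w} := by
                rw [show ({v, u, w} : Set (Fin n)) = {u, v, w} by ext t; simp; tauto]
                exact hdep
              rcases hcore v u w hv hu hw (Ne.symm huv) hvw huw hdep' h with h' | h'
              · exact Or.inr (Or.inl h')
              · exact Or.inl h'.symm
            · rcases hcore u v w hu hv hw huv huw hvw hdep h with h' | h'
              · exact Or.inr (Or.inr h')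
              · exact Or.inl h'
          · exact absurd (hLC u hu v hv (hthird u v w huv hvw huw hdep)) hw
        · by_cases hw : w ∈ S
          · have hdep' : M.Dep {u, w, v} := by
              rw [show ({u, w, v} : Set (Fin n)) = {u, v, w} by ext t; simp; tauto]
              exact hdep
            exact absurd (hLC u hu w hw (hthird u w v huw (Ne.symm hvw) huv hdep')) hv
          · exact Or.inr (Or.inr ((hχ0 v hv).trans (hχ0 w hw).symm))
      · by_cases hv : v ∈ S
        · by_cases hw : w ∈ S
          · have hdep' : M.Dep {v, w, u} := by
              rw [show ({v, w, u} : Set (Fin n)) = {u, v, w} by ext t; simp; tauto]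
              exact hdep
            exact absurd (hLC v hv w hw (hthird v w u hvw (Ne.symm huw) (Ne.symm huv) hdep')) hu
          · exact Or.inr (Or.inl ((hχ0 u hu).trans (hχ0 w hw).symm))
        · exact Or.inl ((hχ0 u hu).trans (hχ0 v hv).symm)
    -- the dependent circuit-ish list
    have hxT' : x ∉ T := fun h => hxS (hTS h)
    have hxTl : x ∉ Tl := fun h => hxT' ((hTlmem x).mp h)
    have hCnd : (x :: Tl).Nodup := List.nodup_cons.mpr ⟨hxTl, hTlnd⟩
    have hCset : {i | i ∈ x :: Tl} = insert x T := by
      ext i; simp [hTlmem i]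
    have hCdep : M.Dep {i | i ∈ x :: Tl} := by
      rw [hCset]
      constructor
      · intro hind
        rcases hTi.insert_indep_iff.mp hind with h | h
        · exact h.2 hxT
        · exact hxT' h
      · rw [hE]; exact Set.subset_univ _
    have hmemOS : D (eS K (x :: Tl)) ∈ OSIdeal K M D :=
      TwoSidedIdeal.subset_span ⟨x :: Tl, hCnd, hCdep, rfl⟩
    have hzero : lam Tl.length χ (D (eS K (x :: Tl))) = 0 :=
      lam_kAdic_zero M hsimple D hD χ hχmain _ ((hquad _).mpr hmemOS)
    -- value computation
    have hTterm : lam Tl.length χ (eS K Tl) = 1 := by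
      rw [eS_eq_Elist]
      have hlen : (Tl.map fun t => (Pi.single t 1 : Fin n → K)).length = Tl.length := by simp
      rw [lam_Elist_eq χ _ hlen]
      have hrows : (fun i : Fin Tl.length =>
          phiHat Tl.length χ ((Tl.map fun t => (Pi.single t 1 : Fin n → K)).get
            (Fin.cast hlen.symm i))) = fun i => χ (Tl.get i) := by
        funext i
        rw [List.get_eq_getElem, List.getElem_map]
        simp only [Fin.coe_cast]
        rw [phiHat_single]
        congr 1
      rw [hrows]
      have hentry : ∀ i j : Fin Tl.length, χ (Tl.get i) j = if i ≤ j then 1 else 0 := by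
        intro i j
        simp only [hχdef]
        by_cases hij : i ≤ j
        · rw [if_pos, if_pos hij]
          refine ⟨hTS (hget_mem i), ?_⟩
          refine M.subset_closure _ (by rw [hE]; exact Set.subset_univ _) ⟨i, hij, rfl⟩
        · rw [if_neg, if_neg hij]
          rintro ⟨-, hmem⟩
          have hsub : (fun k : Fin Tl.length => Tl.get k) '' {k | k ≤ j}
              ⊆ T \ {Tl.get i} := by
            rintro t ⟨k, hk, rfl⟩
            refine ⟨hget_mem k, ?_⟩
            simp only [Set.mem_singleton_iff]
            intro hne
            have hki : k = i := hget_inj hne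
            have hk' : (k : ℕ) ≤ (j : ℕ) := hk
            have hij' : ¬ ((i : ℕ) ≤ (j : ℕ)) := fun h => hij (Fin.le_def.mpr h)
            rw [hki] at hk'
            omega
          have hclsub : F j ⊆ M.closure (T \ {Tl.get i}) := M.closure_subset_closure hsub
          exact ((M.indep_iff_forall_notMem_closure_diff hTi.subset_ground).mp hTi
            (hget_mem i)) (hclsub hmem)
      have hdet : Matrix.detRowAlternating (R := K) (n := Fin Tl.length)
          (fun i => χ (Tl.get i)) = Matrix.det (Matrix.of fun i => χ (Tl.get i)) := rfl
      rw [hdet]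
      rw [Matrix.det_of_upperTriangular (M := Matrix.of fun i => χ (Tl.get i))
        (by
          intro i j hji
          rw [Matrix.of_apply, hentry]
          rw [if_neg]
          exact fun h => absurd (lt_of_le_of_lt h hji) (lt_irrefl _))]
      refine Finset.prod_eq_one fun i _ => ?_
      rw [Matrix.of_apply, hentry, if_pos le_rfl]
    have hxterm : ∀ i : Fin Tl.length,
        lam Tl.length χ (eS K (x :: Tl.eraseIdx (i : ℕ))) = 0 := by
      intro i
      rw [eS_eq_Elist]
      have hlen : ((x :: Tl.eraseIdx (i : ℕ)).map
          fun t => (Pi.single t 1 : Fin n → K)).length = Tl.length := by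
        simp only [List.length_map, List.length_cons, List.length_eraseIdx]
        have := i.isLt
        simp only [if_pos this]
        omega
      rw [lam_Elist_eq χ _ hlen]
      have hp0 : 0 < Tl.length := lt_of_le_of_lt (Nat.zero_le _) i.isLt
      have hdet : Matrix.detRowAlternating (R := K) (n := Fin Tl.length)
          (fun r => phiHat Tl.length χ
            (((x :: Tl.eraseIdx (i : ℕ)).map fun t => (Pi.single t 1 : Fin n → K)).get
              (Fin.cast hlen.symm r)))
          = Matrix.det (Matrix.of fun r => phiHat Tl.length χ
            (((x :: Tl.eraseIdx (i : ℕ)).map fun t => (Pi.single t 1 : Fin n → K)).get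
              (Fin.cast hlen.symm r))) := rfl
      rw [hdet]
      refine Matrix.det_eq_zero_of_row_eq_zero ⟨0, hp0⟩ fun j => ?_
      rw [Matrix.of_apply]
      have hrow0 : (((x :: Tl.eraseIdx (i : ℕ)).map
          fun t => (Pi.single t 1 : Fin n → K)).get
            (Fin.cast hlen.symm ⟨0, hp0⟩)) = Pi.single x 1 := by
        rw [List.get_eq_getElem]
        simp only [Fin.coe_cast]
        rfl
      rw [hrow0, phiHat_single, hχ0 x hxS]
      rfl
    have hone : lam Tl.length χ (D (eS K (x :: Tl))) = 1 := by
      rw [hD (x :: Tl), map_sum]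
      simp only [List.length_cons, Fin.sum_univ_succ, map_smul, Fin.val_zero, pow_zero,
        one_smul, Fin.val_succ, List.eraseIdx_cons_succ, List.eraseIdx_cons_zero]
      rw [hTterm]
      simp [hxterm]
    rw [hone] at hzero
    exact one_ne_zero hzero
  have hSeq : M.closure S = S := Set.Subset.antisymm hclS (M.subset_closure S hSE)
  have hflat : M.IsFlat (M.closure S) := by
    rw [Matroid.closure_def, Set.sInter_eq_iInter]
    haveI : Nonempty {F // F ∈ {F | M.IsFlat F ∧ S ∩ M.E ⊆ F}} :=
      ⟨⟨M.E, M.ground_isFlat, Set.inter_subset_right⟩⟩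
    exact Matroid.IsFlat.iInter (fun F => F.2.1)
  exact hSeq ▸ hflat
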